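/- Let β > 0 and energies E_0 ≤ ... ≤ E_{d-1}. Let λ^↑ be a probability vector sorted in ascending order (λ_0^↑ ≤ ... ≤ λ_{d-1}^↑). Then for every permutation π of {0,...,d-1}, the vector λ^↑ thermo-majorizes the permuted vector π·λ^↑: that is, there exists a stochastic matrix M with M·g = g (where g_i ∝ e^{-βE_i}) such that M·λ^↑ = π·λ^↑. -/

import Mathlib

/-- A "T-transform"-like Gibbs-stochastic matrix swapping two entries of `v`,
possible when `v i ≤ v j` while `g j ≤ g i`. -/
lemma gibbs_swap_matrix {d : ℕ} (g v : Fin d → ℝ) (i j : Fin d) (hij : i ≠ j)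
    (hgj : 0 < g j) (hgij : g j ≤ g i)
    (hvi : 0 ≤ v i) (hvj : 0 ≤ v j) (hvij : v i ≤ v j) :
    ∃ B : Matrix (Fin d) (Fin d) ℝ,
      (∀ k l, 0 ≤ B k l) ∧ (∀ l, ∑ k, B k l = 1) ∧
      B.mulVec g = g ∧ B.mulVec v = fun k => v (Equiv.swap i j k) := by
  set D : ℝ := g i * v j - g j * v i with hD
  set a : ℝ := g j * (v j - v i) / D with ha
  set b : ℝ := g i * (v j - v i) / D with hb
  have hgi : 0 < g i := lt_of_lt_of_le hgj hgij
  have hDnn : g j * (v j - v i) ≤ D := by nlinarith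
  have key : (v i = v j ∧ a = 0 ∧ b = 0) ∨ (0 < D) := by
    rcases eq_or_lt_of_le hvij with h | h
    · rcases eq_or_lt_of_le (show (0:ℝ) ≤ D by nlinarith) with hD0 | hD0
      · left; refine ⟨h, ?_, ?_⟩ <;> simp [ha, hb, ← hD0, h]
      · right; exact hD0
    · right; nlinarith
  have hab : a * g i = b * g j := by
    rcases key with ⟨h, ha0, hb0⟩ | h
    · rw [ha0, hb0]; ring
    · field_simp [ha, hb]; ring
  have habv : a * v i - b * v j = v i - v j := by
    rcases key with ⟨h, ha0, hb0⟩ | h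
    · rw [ha0, hb0, h]; ring
    · rw [ha, hb, div_mul_eq_mul_div, div_mul_eq_mul_div, ← sub_div, div_eq_iff h.ne', hD]; ring
  have ha0 : 0 ≤ a := by
    rcases key with ⟨h, ha0, hb0⟩ | h
    · rw [ha0]
    · apply div_nonneg _ h.le; nlinarith
  have hb0 : 0 ≤ b := by
    rcases key with ⟨h, ha0', hb0⟩ | h
    · rw [hb0]
    · apply div_nonneg _ h.le; nlinarith
  have ha1 : a ≤ 1 := by
    rcases key with ⟨h, ha0', hb0⟩ | h
    · rw [ha0']; norm_num
    · rw [ha, div_le_one h]; nlinarith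
  have hb1 : b ≤ 1 := by
    rcases key with ⟨h, ha0', hb0'⟩ | h
    · rw [hb0']; norm_num
    · rw [hb, div_le_one h]; nlinarith
  clear hD ha hb
  clear_value D a b
  have hmv : ∀ x : Fin d → ℝ, ∀ k, (Matrix.mulVec (fun k l => (if k = l then (1:ℝ) else 0) +
      ((if k = j then (1:ℝ) else 0) - if k = i then 1 else 0) *
      (a * (if l = i then 1 else 0) - b * (if l = j then 1 else 0))) x) k
      = x k + ((if k = j then (1:ℝ) else 0) - if k = i then 1 else 0) * (a * x i - b * x j) := by
    intro x k
    have hterm : ∀ l : Fin d, ((if k = l then (1:ℝ) else 0) +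
        ((if k = j then (1:ℝ) else 0) - if k = i then 1 else 0) *
        (a * (if l = i then 1 else 0) - b * (if l = j then 1 else 0))) * x l
        = (if k = l then x l else 0) +
          ((((if k = j then (1:ℝ) else 0) - if k = i then 1 else 0) * a) *
            (if l = i then x l else 0) -
           (((if k = j then (1:ℝ) else 0) - if k = i then 1 else 0) * b) *
            (if l = j then x l else 0)) := by
      intro l; split_ifs <;> ring
    simp only [Matrix.mulVec, dotProduct]
    rw [Finset.sum_congr rfl (fun l _ => hterm l), Finset.sum_add_distrib,
      Finset.sum_sub_distrib, ← Finset.mul_sum, ← Finset.mul_sum]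
    simp only [Finset.sum_ite_eq, Finset.sum_ite_eq', Finset.mem_univ, if_true]
    ring
  refine ⟨fun k l => (if k = l then (1:ℝ) else 0) +
      ((if k = j then (1:ℝ) else 0) - if k = i then 1 else 0) *
      (a * (if l = i then 1 else 0) - b * (if l = j then 1 else 0)), ?_, ?_, ?_, ?_⟩
  · intro k l
    rcases eq_or_ne k i with rfl | hki <;> rcases eq_or_ne k j with rfl | hkj <;>
      rcases eq_or_ne k l with rfl | hkl <;>
      simp_all <;> split_ifs <;> simp_all <;> linarith
  · intro l
    rw [Finset.sum_add_distrib]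
    have h1 : ∑ k, (if k = l then (1:ℝ) else 0) = 1 := by simp
    have h2 : ∑ k, ((if k = j then (1:ℝ) else 0) - if k = i then 1 else 0) *
        (a * (if l = i then 1 else 0) - b * (if l = j then 1 else 0)) = 0 := by
      rw [← Finset.sum_mul]
      have : ∑ k, ((if k = j then (1:ℝ) else 0) - if k = i then 1 else 0) = 0 := by
        rw [Finset.sum_sub_distrib]; simp
      rw [this, zero_mul]
    rw [h1, h2, add_zero]
  · funext k
    rw [hmv g k]
    have h0 : a * g i - b * g j = 0 := by linarith
    rw [h0, mul_zero, add_zero]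
  · funext k
    rw [hmv v k]
    rcases eq_or_ne k i with rfl | hki
    · simp [Equiv.swap_apply_left, hij, if_neg (Ne.symm hij)]
      linarith
    · rcases eq_or_ne k j with rfl | hkj
      · simp [Equiv.swap_apply_right, hki]
        linarith
      · simp [Equiv.swap_apply_of_ne_of_ne hki hkj, if_neg hki, if_neg hkj]

lemma gibbs_perm_reachable {d : ℕ} (g lam : Fin d → ℝ)
    (hg : ∀ k, 0 < g k) (hganti : Antitone g)
    (hlam0 : ∀ k, 0 ≤ lam k) (hmono : Monotone lam) :
    ∀ n : ℕ, ∀ σ : Equiv.Perm (Fin d), (∀ k : Fin d, n ≤ (k : ℕ) → σ k = k) →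
    ∃ M : Matrix (Fin d) (Fin d) ℝ,
      (∀ k l, 0 ≤ M k l) ∧ (∀ l, ∑ k, M k l = 1) ∧
      M.mulVec g = g ∧ M.mulVec lam = fun k => lam (σ k) := by
  intro n
  induction n with
  | zero =>
    intro σ hσ
    have hσ1 : σ = 1 := Equiv.ext fun k => hσ k (Nat.zero_le _)
    subst hσ1
    refine ⟨1, ?_, ?_, Matrix.one_mulVec g, ?_⟩
    · intro k l; rw [Matrix.one_apply]; split_ifs <;> norm_num
    · intro l; simp [Matrix.one_apply]
    · rw [Matrix.one_mulVec]; simp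
  | succ n IH =>
    intro σ hσ
    by_cases h : ∀ k : Fin d, n ≤ (k : ℕ) → σ k = k
    · exact IH σ h
    push_neg at h
    obtain ⟨j, hnj, hj⟩ := h
    have hjn : (j : ℕ) = n := by
      rcases eq_or_lt_of_le hnj with h' | h'
      · exact h'.symm
      · exact absurd (hσ j h') hj
    set i := σ⁻¹ j with hi
    have hσi : σ i = j := Equiv.apply_symm_apply σ j
    have hij : i ≠ j := by
      intro h'
      exact hj (by rw [← h', hσi, h'])
    have hilt : (i : ℕ) < n := by
      rcases lt_or_ge (i : ℕ) n with h' | h'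
      · exact h'
      rcases eq_or_lt_of_le h' with h'' | h''
      · exact absurd (Fin.ext (by omega) : i = j) hij
      · have h3 := hσ i h''
        rw [hσi] at h3
        exact absurd h3 (Ne.symm hij)
    have hσjlt : (σ j : ℕ) < n := by
      rcases lt_or_ge ((σ j : ℕ)) n with h' | h'
      · exact h'
      rcases eq_or_lt_of_le h' with h'' | h''
      · have : σ j = j := Fin.ext (by omega)
        exact absurd this hj
      · have : σ (σ j) = σ j := hσ (σ j) h''
        exact absurd (σ.injective this) hj
    set σ' := σ * Equiv.swap i j with hσ'def
    have hσ' : ∀ k : Fin d, n ≤ (k : ℕ) → σ' k = k := by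
      intro k hk
      rcases eq_or_ne k j with rfl | hkj
      · simp [hσ'def, Equiv.swap_apply_right, hσi]
      · have hkn : n + 1 ≤ (k : ℕ) := by
          rcases eq_or_lt_of_le hk with h' | h'
          · exact absurd (Fin.ext (by omega) : k = j) hkj
          · omega
        have hki : k ≠ i := by intro h'; rw [h'] at hkn; omega
        simp [hσ'def, Equiv.swap_apply_of_ne_of_ne hki hkj, hσ k hkn]
    obtain ⟨M', hM'0, hM'1, hM'g, hM'lam⟩ := IH σ' hσ'
    have hilej : i ≤ j := by
      apply Fin.le_def.mpr; omega
    have hσ'i : σ' i = σ j := by simp [hσ'def, Equiv.swap_apply_left]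
    have hσ'j : σ' j = j := by simp [hσ'def, Equiv.swap_apply_right, hσi]
    obtain ⟨B, hB0, hB1, hBg, hBv⟩ :=
      gibbs_swap_matrix g (fun k => lam (σ' k)) i j hij (hg j) (hganti hilej)
        (hlam0 _) (hlam0 _)
        (by
          simp only [hσ'i, hσ'j]
          exact hmono (by apply Fin.le_def.mpr; omega : σ j ≤ j))
    refine ⟨B * M', ?_, ?_, ?_, ?_⟩
    · intro k l
      rw [Matrix.mul_apply]
      exact Finset.sum_nonneg fun m _ => mul_nonneg (hB0 k m) (hM'0 m l)
    · intro l
      simp only [Matrix.mul_apply]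
      rw [Finset.sum_comm]
      have : ∀ m : Fin d, ∑ k, B k m * M' m l = M' m l := by
        intro m; rw [← Finset.sum_mul, hB1 m, one_mul]
      rw [Finset.sum_congr rfl fun m _ => this m, hM'1 l]
    · rw [← Matrix.mulVec_mulVec, hM'g, hBg]
    · rw [← Matrix.mulVec_mulVec, hM'lam, hBv]
      funext k
      have : σ' (Equiv.swap i j k) = σ k := by
        simp [hσ'def, Equiv.swap_apply_self]
      rw [this]

/-- the ascending-ordered vector thermo-majorizes any of its permutations:
there is a Gibbs-stochastic matrix mapping λ^↑ to π·λ^↑. -/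
theorem ascending_thermo_majorizes_permutation
    (d : ℕ) (hd : 1 ≤ d) (β : ℝ) (hβ : 0 < β)
    (En : Fin d → ℝ) (hE : Monotone En)
    (lam : Fin d → ℝ) (hlam0 : ∀ i, 0 ≤ lam i) (hlam1 : ∑ i, lam i = 1)
    (hsorted : Monotone lam) (π : Equiv.Perm (Fin d)) :
    let g : Fin d → ℝ := fun i => Real.exp (-β * En i) / ∑ j, Real.exp (-β * En j)
    ∃ M : Matrix (Fin d) (Fin d) ℝ,
      (∀ i j, 0 ≤ M i j) ∧ (∀ j, ∑ i, M i j = 1) ∧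
      M.mulVec g = g ∧ M.mulVec lam = fun i => lam (π i) := by
  intro g
  have hne : Nonempty (Fin d) := ⟨⟨0, by omega⟩⟩
  have hZ : 0 < ∑ j, Real.exp (-β * En j) :=
    Finset.sum_pos (fun j _ => Real.exp_pos _) Finset.univ_nonempty
  have hg : ∀ k, 0 < g k := fun k => div_pos (Real.exp_pos _) hZ
  have hganti : Antitone g := by
    intro k l hkl
    have : Real.exp (-β * En l) ≤ Real.exp (-β * En k) := by
      apply Real.exp_le_exp.mpr
      nlinarith [hE hkl]
    exact div_le_div_of_nonneg_right this hZ.le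
  exact gibbs_perm_reachable g lam hg hganti hlam0 hsorted d π
    (fun k hk => absurd hk (by omega))
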